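/- Let ζ > 0 and T > 0, and let w be a classical zero-input solution of the micro-beam system on [0,1] × [0,T]. Then the total energy is conserved: E(t) = E(0) for every t ∈ [0,T]. -/

import Mathlib

open Set MeasureTheory intervalIntegral Function

/-- `wxD w m x t` is the `m`-th spatial derivative of `w` on `[0,1]`. -/
noncomputable def wxD (w : ℝ → ℝ → ℝ) (m : ℕ) (x t : ℝ) : ℝ :=
  iteratedDerivWithin m (fun x' => w x' t) (Icc (0:ℝ) 1) x

/-- `wtD w T k x t` is the `k`-th time derivative of `w` on `[0,T]`. -/
noncomputable def wtD (w : ℝ → ℝ → ℝ) (T : ℝ) (k : ℕ) (x t : ℝ) : ℝ :=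
  iteratedDerivWithin k (fun t' => w x t') (Icc (0:ℝ) T) t

/-- A classical zero-input solution of the micro-beam system on `[0,1] × [0,T]`:
`C⁶` in `x`, `C²` in `t`, jointly continuous with all these partial derivatives,
satisfying the PDE and the boundary conditions. -/
def IsBeamSolution (ζ T : ℝ) (w : ℝ → ℝ → ℝ) : Prop :=
  (∀ t ∈ Icc (0:ℝ) T, ContDiffOn ℝ 6 (fun x => w x t) (Icc (0:ℝ) 1)) ∧
  (∀ x ∈ Icc (0:ℝ) 1, ContDiffOn ℝ 2 (fun t => w x t) (Icc (0:ℝ) T)) ∧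
  (∀ m : ℕ, m ≤ 6 →
    ContinuousOn (fun p : ℝ × ℝ => wxD w m p.1 p.2) (Icc (0:ℝ) 1 ×ˢ Icc (0:ℝ) T)) ∧
  (∀ k : ℕ, k ≤ 2 →
    ContinuousOn (fun p : ℝ × ℝ => wtD w T k p.1 p.2) (Icc (0:ℝ) 1 ×ˢ Icc (0:ℝ) T)) ∧
  (∀ x ∈ Icc (0:ℝ) 1, ∀ t ∈ Icc (0:ℝ) T,
    wxD w 4 x t - ζ * wxD w 6 x t + wtD w T 2 x t = 0) ∧
  (∀ t ∈ Icc (0:ℝ) T,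
    w 0 t = 0 ∧ wxD w 1 0 t = 0 ∧ wxD w 2 0 t = 0 ∧
    ζ * wxD w 5 1 t - wxD w 3 1 t = 0 ∧
    wxD w 2 1 t - ζ * wxD w 4 1 t = 0 ∧
    ζ * wxD w 3 1 t = 0)

/-- Kinetic energy. -/
noncomputable def kinE (w : ℝ → ℝ → ℝ) (T t : ℝ) : ℝ :=
  (1/2) * ∫ x in (0:ℝ)..1, (wtD w T 1 x t)^2

/-- Strain energy. -/
noncomputable def strE (ζ : ℝ) (w : ℝ → ℝ → ℝ) (t : ℝ) : ℝ :=
  (1/2) * ∫ x in (0:ℝ)..1, ((wxD w 2 x t)^2 + ζ * (wxD w 3 x t)^2)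

/-- Total energy. -/
noncomputable def totE (ζ : ℝ) (w : ℝ → ℝ → ℝ) (T t : ℝ) : ℝ :=
  kinE w T t + strE ζ w t

/-! ### Auxiliary lemmas -/

/-- Fundamental theorem of calculus on a compact interval, from one-sided
(within-set) derivatives. -/
lemma beam_ftcIcc {a b : ℝ} (hab : a ≤ b) {F D : ℝ → ℝ}
    (hF : ∀ x ∈ Icc a b, HasDerivWithinAt F (D x) (Icc a b) x)
    (hD : ContinuousOn D (Icc a b)) :
    ∫ x in a..b, D x = F b - F a := by
  have hFc : ContinuousOn F (Icc a b) := fun x hx => (hF x hx).continuousWithinAt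
  apply intervalIntegral.integral_eq_sub_of_hasDeriv_right_of_le hab hFc
  · intro x hx
    exact ((hF x (Ioo_subset_Icc_self hx)).hasDerivAt
      (Icc_mem_nhds hx.1 hx.2)).hasDerivWithinAt
  · exact (hD.intervalIntegrable_of_Icc hab)

/-- Continuity of a parametric interval integral with parameters in a compact set. -/
lemma beam_contParam {α : Type*} [MetricSpace α] {F : ℝ → α → ℝ} {S : Set α}
    (hS : IsCompact S)
    (hF : ContinuousOn (fun p : ℝ × α => F p.1 p.2) (Icc (0:ℝ) 1 ×ˢ S)) :
    ContinuousOn (fun a => ∫ x in (0:ℝ)..1, F x a) S := by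
  have hK : IsCompact (Icc (0:ℝ) 1 ×ˢ S) := isCompact_Icc.prod hS
  have hu := hK.uniformContinuousOn_of_continuous hF
  rw [Metric.uniformContinuousOn_iff] at hu
  have hint : ∀ b ∈ S, IntervalIntegrable (fun x => F x b) volume 0 1 := by
    intro b hb
    apply ContinuousOn.intervalIntegrable_of_Icc zero_le_one
    exact hF.comp ((continuous_id.prodMk continuous_const).continuousOn)
      (fun x hx => ⟨hx, hb⟩)
  intro a₀ ha₀
  rw [Metric.continuousWithinAt_iff]
  intro ε hε
  obtain ⟨δ, hδ, hδ'⟩ := hu (ε/2) (by positivity)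
  refine ⟨δ, hδ, fun a ha hdist => ?_⟩
  have key : ∀ x ∈ uIoc (0:ℝ) 1, ‖F x a - F x a₀‖ ≤ ε/2 := by
    intro x hx
    have hx' : x ∈ Icc (0:ℝ) 1 := by
      rw [uIoc_of_le zero_le_one] at hx; exact Ioc_subset_Icc_self hx
    have := hδ' (x, a) ⟨hx', ha⟩ (x, a₀) ⟨hx', ha₀⟩ ?_
    · rw [Real.dist_eq] at this; exact le_of_lt this
    · rw [Prod.dist_eq]; simp only [dist_self, max_lt_iff]; exact ⟨hδ, hdist⟩
  have hb : dist (∫ x in (0:ℝ)..1, F x a) (∫ x in (0:ℝ)..1, F x a₀) ≤ ε/2 := by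
    rw [dist_eq_norm, ← intervalIntegral.integral_sub (hint a ha) (hint a₀ ha₀)]
    have := intervalIntegral.norm_integral_le_of_norm_le_const key
    simpa using this
  linarith [hb]

/-- Fubini for continuous functions on `[0,1] × [a,b]`. -/
lemma beam_fubini {f : ℝ → ℝ → ℝ} {a b : ℝ} (hab : a ≤ b)
    (hf : ContinuousOn (fun p : ℝ × ℝ => f p.1 p.2) (Icc (0:ℝ) 1 ×ˢ Icc a b)) :
    ∫ x in (0:ℝ)..1, (∫ r in a..b, f x r) = ∫ r in a..b, ∫ x in (0:ℝ)..1, f x r := by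
  have hInt : Integrable (uncurry f)
      ((volume.restrict (Ioc (0:ℝ) 1)).prod (volume.restrict (Ioc a b))) := by
    rw [Measure.prod_restrict]
    have h1 : IntegrableOn (uncurry f) (Icc (0:ℝ) 1 ×ˢ Icc a b) (volume.prod volume) :=
      hf.integrableOn_compact (isCompact_Icc.prod isCompact_Icc)
    exact h1.mono_set (prod_mono Ioc_subset_Icc_self Ioc_subset_Icc_self)
  rw [intervalIntegral.integral_of_le hab]
  rw [intervalIntegral.integral_of_le zero_le_one]
  simp_rw [intervalIntegral.integral_of_le hab, intervalIntegral.integral_of_le zero_le_one]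
  exact MeasureTheory.integral_integral_swap hInt

lemma beam_wx_deriv {w : ℝ → ℝ → ℝ} {t : ℝ}
    (h6 : ContDiffOn ℝ 6 (fun x => w x t) (Icc (0:ℝ) 1)) {m : ℕ} (hm : m < 6)
    {x : ℝ} (hx : x ∈ Icc (0:ℝ) 1) :
    HasDerivWithinAt (fun y => wxD w m y t) (wxD w (m+1) x t) (Icc (0:ℝ) 1) x := by
  have hu : UniqueDiffOn ℝ (Icc (0:ℝ) 1) := uniqueDiffOn_Icc one_pos
  have hd := (h6.differentiableOn_iteratedDerivWithin (by exact_mod_cast hm) hu) x hx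
  have h := hd.hasDerivWithinAt
  rwa [show derivWithin (iteratedDerivWithin m (fun x' => w x' t) (Icc (0:ℝ) 1)) (Icc (0:ℝ) 1) x
      = wxD w (m+1) x t from (congrFun iteratedDerivWithin_succ x).symm] at h

lemma beam_wt_deriv {w : ℝ → ℝ → ℝ} {T x : ℝ} (hT : 0 < T)
    (h2 : ContDiffOn ℝ 2 (fun t => w x t) (Icc (0:ℝ) T)) {k : ℕ} (hk : k < 2)
    {t : ℝ} (ht : t ∈ Icc (0:ℝ) T) :
    HasDerivWithinAt (fun s => wtD w T k x s) (wtD w T (k+1) x t) (Icc (0:ℝ) T) t := by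
  have hu : UniqueDiffOn ℝ (Icc (0:ℝ) T) := uniqueDiffOn_Icc hT
  have hd := (h2.differentiableOn_iteratedDerivWithin (by exact_mod_cast hk) hu) t ht
  have h := hd.hasDerivWithinAt
  rwa [show derivWithin (iteratedDerivWithin k (fun t' => w x t') (Icc (0:ℝ) T)) (Icc (0:ℝ) T) t
      = wtD w T (k+1) x t from (congrFun iteratedDerivWithin_succ t).symm] at h

lemma beam_wxD_zero (w : ℝ → ℝ → ℝ) (x t : ℝ) : wxD w 0 x t = w x t := by simp [wxD]
lemma beam_wtD_zero (w : ℝ → ℝ → ℝ) (T x t : ℝ) : wtD w T 0 x t = w x t := by simp [wtD]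

set_option maxHeartbeats 1000000 in
/-- The key integration-by-parts identity. -/
lemma beam_ibp (ζ T : ℝ) (hT : 0 < T) (w : ℝ → ℝ → ℝ) (hw : IsBeamSolution ζ T w) :
    ∀ s ∈ Icc (0:ℝ) T, ∀ u ∈ Icc (0:ℝ) T,
    ∫ x in (0:ℝ)..1, (wxD w 2 x s * wxD w 2 x u + ζ * (wxD w 3 x s * wxD w 3 x u)
      + wtD w T 2 x u * w x s) = 0 := by
  obtain ⟨hx6, ht2, hcx, hct, hpde, hbc⟩ := hw
  intro s hs u hu
  have hder : ∀ x ∈ Icc (0:ℝ) 1,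
      HasDerivWithinAt (fun x => wxD w 2 x u * wxD w 1 x s - wxD w 3 x u * wxD w 0 x s
        + ζ * (wxD w 3 x u * wxD w 2 x s - wxD w 4 x u * wxD w 1 x s
          + wxD w 5 x u * wxD w 0 x s))
      (wxD w 2 x s * wxD w 2 x u + ζ * (wxD w 3 x s * wxD w 3 x u)
        + wtD w T 2 x u * w x s) (Icc (0:ℝ) 1) x := by
    intro x hx
    have ds0 := beam_wx_deriv (hx6 s hs) (m := 0) (by norm_num) hx
    have ds1 := beam_wx_deriv (hx6 s hs) (m := 1) (by norm_num) hx
    have ds2 := beam_wx_deriv (hx6 s hs) (m := 2) (by norm_num) hx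
    have du2 := beam_wx_deriv (hx6 u hu) (m := 2) (by norm_num) hx
    have du3 := beam_wx_deriv (hx6 u hu) (m := 3) (by norm_num) hx
    have du4 := beam_wx_deriv (hx6 u hu) (m := 4) (by norm_num) hx
    have du5 := beam_wx_deriv (hx6 u hu) (m := 5) (by norm_num) hx
    have hpde' := hpde x hx u hu
    have hP := ((du2.mul ds1).sub (du3.mul ds0)).add
      ((((du3.mul ds2).sub (du4.mul ds1)).add (du5.mul ds0)).const_mul ζ)
    convert hP using 1
    · rfl
    · rfl
    · rfl
    simp only [beam_wxD_zero]
    linear_combination (w x s) * hpde'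
  have ctx : ∀ m : ℕ, m ≤ 6 → ∀ t ∈ Icc (0:ℝ) T,
      ContinuousOn (fun x => wxD w m x t) (Icc (0:ℝ) 1) := fun m hm t ht =>
    (hcx m hm).comp ((continuous_id.prodMk continuous_const).continuousOn)
      (fun x hx => ⟨hx, ht⟩)
  have ctt2 : ContinuousOn (fun x : ℝ => wtD w T 2 x u) (Icc (0:ℝ) 1) := by
    apply ContinuousOn.comp (hct 2 le_rfl)
      ((continuous_id.prodMk continuous_const).continuousOn)
    exact fun x hx => ⟨hx, hu⟩
  have cw : ContinuousOn (fun x => w x s) (Icc (0:ℝ) 1) := by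
    have := ctx 0 (by norm_num) s hs
    simpa only [beam_wxD_zero] using this
  have hcont : ContinuousOn (fun x => wxD w 2 x s * wxD w 2 x u
      + ζ * (wxD w 3 x s * wxD w 3 x u) + wtD w T 2 x u * w x s) (Icc (0:ℝ) 1) :=
    (((ctx 2 (by norm_num) s hs).mul (ctx 2 (by norm_num) u hu)).add
      (continuousOn_const.mul ((ctx 3 (by norm_num) s hs).mul
        (ctx 3 (by norm_num) u hu)))).add (ctt2.mul cw)
  have key := beam_ftcIcc zero_le_one hder hcont
  rw [key]
  obtain ⟨hbs1, hbs2, hbs3, _, _, _⟩ := hbc s hs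
  obtain ⟨_, _, _, hbu4, hbu5, hbu6⟩ := hbc u hu
  simp only [beam_wxD_zero]
  linear_combination (wxD w 1 1 s) * hbu5 + (w 1 s) * hbu4 + (wxD w 2 1 s) * hbu6
    - (wxD w 2 0 u) * hbs2 + (wxD w 3 0 u) * hbs1 - ζ * (wxD w 3 0 u) * hbs3
    + ζ * (wxD w 4 0 u) * hbs2 - ζ * (wxD w 5 0 u) * hbs1

lemma beam_cx {ζ T : ℝ} {w : ℝ → ℝ → ℝ} (hw : IsBeamSolution ζ T w) {m : ℕ}
    (hm : m ≤ 6) {t : ℝ} (ht : t ∈ Icc (0:ℝ) T) :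
    ContinuousOn (fun x : ℝ => wxD w m x t) (Icc (0:ℝ) 1) := by
  apply ContinuousOn.comp (hw.2.2.1 m hm)
    ((continuous_id.prodMk continuous_const).continuousOn)
  exact fun x hx => ⟨hx, ht⟩

lemma beam_ct {ζ T : ℝ} {w : ℝ → ℝ → ℝ} (hw : IsBeamSolution ζ T w) {k : ℕ}
    (hk : k ≤ 2) {t : ℝ} (ht : t ∈ Icc (0:ℝ) T) :
    ContinuousOn (fun x : ℝ => wtD w T k x t) (Icc (0:ℝ) 1) := by
  apply ContinuousOn.comp (hw.2.2.2.1 k hk)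
    ((continuous_id.prodMk continuous_const).continuousOn)
  exact fun x hx => ⟨hx, ht⟩

lemma beam_cw {ζ T : ℝ} {w : ℝ → ℝ → ℝ} (hw : IsBeamSolution ζ T w) {t : ℝ}
    (ht : t ∈ Icc (0:ℝ) T) :
    ContinuousOn (fun x : ℝ => w x t) (Icc (0:ℝ) 1) := by
  have := beam_ct hw (k := 0) (by norm_num) ht
  simpa only [beam_wtD_zero] using this

lemma beam_cwt {ζ T : ℝ} {w : ℝ → ℝ → ℝ} (hw : IsBeamSolution ζ T w) {k : ℕ}
    (hk : k ≤ 2) {x : ℝ} (hx : x ∈ Icc (0:ℝ) 1) :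
    ContinuousOn (fun t : ℝ => wtD w T k x t) (Icc (0:ℝ) T) := by
  apply ContinuousOn.comp (hw.2.2.2.1 k hk)
    ((continuous_const.prodMk continuous_id).continuousOn)
  exact fun t ht => ⟨hx, ht⟩

/-- Symmetry of the bilinear form. -/
lemma beam_gsym (ζ T : ℝ) (hT : 0 < T) (w : ℝ → ℝ → ℝ) (hw : IsBeamSolution ζ T w)
    {a b : ℝ} (ha : a ∈ Icc (0:ℝ) T) (hb : b ∈ Icc (0:ℝ) T) :
    ∫ x in (0:ℝ)..1, wtD w T 2 x b * w x a = ∫ x in (0:ℝ)..1, wtD w T 2 x a * w x b := by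
  have h1 := beam_ibp ζ T hT w hw a ha b hb
  have h2 := beam_ibp ζ T hT w hw b hb a ha
  have iS1 : IntervalIntegrable
      (fun x => wxD w 2 x a * wxD w 2 x b + ζ * (wxD w 3 x a * wxD w 3 x b)) volume 0 1 :=
    (((beam_cx hw (by norm_num) ha).mul (beam_cx hw (by norm_num) hb)).add
      (continuousOn_const.mul ((beam_cx hw (by norm_num) ha).mul
        (beam_cx hw (by norm_num) hb)))).intervalIntegrable_of_Icc zero_le_one
  have iS2 : IntervalIntegrable
      (fun x => wxD w 2 x b * wxD w 2 x a + ζ * (wxD w 3 x b * wxD w 3 x a)) volume 0 1 :=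
    (((beam_cx hw (by norm_num) hb).mul (beam_cx hw (by norm_num) ha)).add
      (continuousOn_const.mul ((beam_cx hw (by norm_num) hb).mul
        (beam_cx hw (by norm_num) ha)))).intervalIntegrable_of_Icc zero_le_one
  have iC1 : IntervalIntegrable (fun x => wtD w T 2 x b * w x a) volume 0 1 :=
    ((beam_ct hw (by norm_num) hb).mul (beam_cw hw ha)).intervalIntegrable_of_Icc zero_le_one
  have iC2 : IntervalIntegrable (fun x => wtD w T 2 x a * w x b) volume 0 1 :=
    ((beam_ct hw (by norm_num) ha).mul (beam_cw hw hb)).intervalIntegrable_of_Icc zero_le_one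
  rw [intervalIntegral.integral_add iS1 iC1] at h1
  rw [intervalIntegral.integral_add iS2 iC2] at h2
  have hSS : (∫ x in (0:ℝ)..1, (wxD w 2 x a * wxD w 2 x b + ζ * (wxD w 3 x a * wxD w 3 x b)))
      = ∫ x in (0:ℝ)..1, (wxD w 2 x b * wxD w 2 x a + ζ * (wxD w 3 x b * wxD w 3 x a)) :=
    intervalIntegral.integral_congr (fun x _ => by ring)
  linarith

/-- Kinetic-energy increment. -/
lemma beam_kinc (ζ T : ℝ) (hT : 0 < T) (w : ℝ → ℝ → ℝ) (hw : IsBeamSolution ζ T w)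
    {s₀ s : ℝ} (h0 : s₀ ∈ Icc (0:ℝ) T) (h1 : s ∈ Icc (0:ℝ) T) (hle : s₀ ≤ s) :
    (∫ x in (0:ℝ)..1, (wtD w T 1 x s)^2) - (∫ x in (0:ℝ)..1, (wtD w T 1 x s₀)^2)
      = ∫ r in s₀..s, (2 * ∫ x in (0:ℝ)..1, wtD w T 2 x r * wtD w T 1 x r) := by
  have hsub : Icc s₀ s ⊆ Icc (0:ℝ) T := Icc_subset_Icc h0.1 h1.2
  have pointwise : ∀ x ∈ Icc (0:ℝ) 1, (wtD w T 1 x s)^2 - (wtD w T 1 x s₀)^2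
      = ∫ r in s₀..s, (2 * (wtD w T 2 x r * wtD w T 1 x r)) := by
    intro x hx
    have hder : ∀ r ∈ Icc s₀ s, HasDerivWithinAt (fun r => wtD w T 1 x r * wtD w T 1 x r)
        (2 * (wtD w T 2 x r * wtD w T 1 x r)) (Icc s₀ s) r := by
      intro r hr
      have h := (beam_wt_deriv hT (hw.2.1 x hx) (k := 1) one_lt_two (hsub hr)).mono hsub
      have hm := h.mul h
      convert hm using 1
      · rfl
      · rfl
      · rfl
      ring
    have hcont : ContinuousOn (fun r => 2 * (wtD w T 2 x r * wtD w T 1 x r)) (Icc s₀ s) :=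
      continuousOn_const.mul (((beam_cwt hw (by norm_num) hx).mono hsub).mul
        ((beam_cwt hw (by norm_num) hx).mono hsub))
    have hftc := beam_ftcIcc hle hder hcont
    rw [hftc]; ring
  have isq : ∀ t ∈ Icc (0:ℝ) T,
      IntervalIntegrable (fun x => (wtD w T 1 x t)^2) volume 0 1 := fun t ht =>
    ((beam_ct hw (by norm_num) ht).pow 2).intervalIntegrable_of_Icc zero_le_one
  rw [← intervalIntegral.integral_sub (isq s h1) (isq s₀ h0)]
  rw [intervalIntegral.integral_congr (g := fun x =>
      ∫ r in s₀..s, (2 * (wtD w T 2 x r * wtD w T 1 x r)))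
    (fun x hx => pointwise x (by rwa [uIcc_of_le zero_le_one] at hx))]
  rw [beam_fubini hle (f := fun x r => 2 * (wtD w T 2 x r * wtD w T 1 x r))
    (continuousOn_const.mul
      (((hw.2.2.2.1 2 le_rfl).mono (prod_mono Subset.rfl hsub)).mul
        ((hw.2.2.2.1 1 (by norm_num)).mono (prod_mono Subset.rfl hsub))))]
  simp_rw [intervalIntegral.integral_const_mul]

/-- Increment of the cross term in its first slot. -/
lemma beam_winc (ζ T : ℝ) (hT : 0 < T) (w : ℝ → ℝ → ℝ) (hw : IsBeamSolution ζ T w)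
    {s₀ s u : ℝ} (h0 : s₀ ∈ Icc (0:ℝ) T) (h1 : s ∈ Icc (0:ℝ) T) (hu : u ∈ Icc (0:ℝ) T)
    (hle : s₀ ≤ s) :
    (∫ x in (0:ℝ)..1, wtD w T 2 x u * w x s) - (∫ x in (0:ℝ)..1, wtD w T 2 x u * w x s₀)
      = ∫ r in s₀..s, ∫ x in (0:ℝ)..1, wtD w T 2 x u * wtD w T 1 x r := by
  have hsub : Icc s₀ s ⊆ Icc (0:ℝ) T := Icc_subset_Icc h0.1 h1.2
  have pointwise : ∀ x ∈ Icc (0:ℝ) 1, wtD w T 2 x u * w x s - wtD w T 2 x u * w x s₀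
      = ∫ r in s₀..s, wtD w T 2 x u * wtD w T 1 x r := by
    intro x hx
    have hfun : (fun r : ℝ => wtD w T 0 x r) = (fun r : ℝ => w x r) :=
      funext (fun r => beam_wtD_zero w T x r)
    have hder : ∀ r ∈ Icc s₀ s, HasDerivWithinAt (fun r => w x r)
        (wtD w T 1 x r) (Icc s₀ s) r := by
      intro r hr
      have h := (beam_wt_deriv hT (hw.2.1 x hx) (k := 0) two_pos (hsub hr)).mono hsub
      rwa [hfun] at h
    have hcont : ContinuousOn (fun r : ℝ => wtD w T 1 x r) (Icc s₀ s) :=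
      (beam_cwt hw (by norm_num) hx).mono hsub
    have hftc := beam_ftcIcc hle hder hcont
    rw [← mul_sub, ← hftc, ← intervalIntegral.integral_const_mul]
  have iw : ∀ t ∈ Icc (0:ℝ) T,
      IntervalIntegrable (fun x => wtD w T 2 x u * w x t) volume 0 1 := fun t ht =>
    ((beam_ct hw (by norm_num) hu).mul (beam_cw hw ht)).intervalIntegrable_of_Icc zero_le_one
  rw [← intervalIntegral.integral_sub (iw s h1) (iw s₀ h0)]
  rw [intervalIntegral.integral_congr (g := fun x =>
      ∫ r in s₀..s, wtD w T 2 x u * wtD w T 1 x r)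
    (fun x hx => pointwise x (by rwa [uIcc_of_le zero_le_one] at hx))]
  have hjc : ContinuousOn (fun p : ℝ × ℝ => wtD w T 2 p.1 u * wtD w T 1 p.1 p.2)
      (Icc (0:ℝ) 1 ×ˢ Icc s₀ s) := by
    apply ContinuousOn.mul
    · apply ContinuousOn.comp (hw.2.2.2.1 2 le_rfl)
        ((continuous_fst.prodMk continuous_const).continuousOn)
      exact fun p hp => ⟨hp.1, hu⟩
    · exact (hw.2.2.2.1 1 (by norm_num)).mono (prod_mono Subset.rfl hsub)
  exact beam_fubini hle hjc

set_option maxHeartbeats 1000000 in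
/-- Conservation of total energy for classical zero-input solutions of the
micro-beam system. -/
theorem stmt_14 (ζ T : ℝ) (hζ : 0 < ζ) (hT : 0 < T)
    (w : ℝ → ℝ → ℝ) (hw : IsBeamSolution ζ T w) :
    ∀ t ∈ Icc (0:ℝ) T, totE ζ w T t = totE ζ w T 0 := by
  set φ : ℝ → ℝ := fun t => (∫ x in (0:ℝ)..1, (wtD w T 1 x t)^2)
    - ∫ x in (0:ℝ)..1, wtD w T 2 x t * w x t with hφdef
  set Q : ℝ → ℝ → ℝ := fun r u => ∫ x in (0:ℝ)..1, wtD w T 2 x u * wtD w T 1 x r with hQdef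
  -- total energy in terms of φ
  have htot : ∀ t ∈ Icc (0:ℝ) T, 2 * totE ζ w T t = φ t := by
    intro t ht
    have hib := beam_ibp ζ T hT w hw t ht t ht
    have iS : IntervalIntegrable
        (fun x => wxD w 2 x t * wxD w 2 x t + ζ * (wxD w 3 x t * wxD w 3 x t)) volume 0 1 :=
      (((beam_cx hw (by norm_num) ht).mul (beam_cx hw (by norm_num) ht)).add
        (continuousOn_const.mul ((beam_cx hw (by norm_num) ht).mul
          (beam_cx hw (by norm_num) ht)))).intervalIntegrable_of_Icc zero_le_one
    have iC : IntervalIntegrable (fun x => wtD w T 2 x t * w x t) volume 0 1 :=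
      ((beam_ct hw (by norm_num) ht).mul (beam_cw hw ht)).intervalIntegrable_of_Icc zero_le_one
    rw [intervalIntegral.integral_add iS iC] at hib
    have hs2 : (∫ x in (0:ℝ)..1, ((wxD w 2 x t)^2 + ζ * (wxD w 3 x t)^2))
        = ∫ x in (0:ℝ)..1, (wxD w 2 x t * wxD w 2 x t + ζ * (wxD w 3 x t * wxD w 3 x t)) :=
      intervalIntegral.integral_congr (fun x _ => by ring)
    simp only [hφdef, totE, kinE, strE]
    rw [hs2]
    linarith
  -- joint continuity of Q
  have QC : ContinuousOn (fun p : ℝ × ℝ => Q p.1 p.2) (Icc (0:ℝ) T ×ˢ Icc (0:ℝ) T) := by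
    apply beam_contParam (isCompact_Icc.prod isCompact_Icc)
    apply ContinuousOn.mul
    · apply ContinuousOn.comp (hw.2.2.2.1 2 le_rfl)
        (Continuous.continuousOn (by fun_prop : Continuous (fun p : ℝ × (ℝ × ℝ) => (p.1, p.2.2))))
      exact fun p hp => ⟨hp.1, hp.2.2⟩
    · apply ContinuousOn.comp (hw.2.2.2.1 1 (by norm_num))
        (Continuous.continuousOn (by fun_prop : Continuous (fun p : ℝ × (ℝ × ℝ) => (p.1, p.2.1))))
      exact fun p hp => ⟨hp.1, hp.2.1⟩
  -- continuity of φ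
  have φcont : ContinuousOn φ (Icc (0:ℝ) T) := by
    apply ContinuousOn.sub
    · apply beam_contParam isCompact_Icc
      exact (hw.2.2.2.1 1 (by norm_num)).pow 2
    · apply beam_contParam isCompact_Icc
      apply ContinuousOn.mul (hw.2.2.2.1 2 le_rfl)
      have hw0 : (fun p : ℝ × ℝ => wtD w T 0 p.1 p.2) = fun p : ℝ × ℝ => w p.1 p.2 :=
        funext fun p => beam_wtD_zero w T p.1 p.2
      rw [← hw0]
      exact hw.2.2.2.1 0 (by norm_num)
  -- increment identity
  have inc : ∀ s₀ ∈ Icc (0:ℝ) T, ∀ s ∈ Icc (0:ℝ) T, s₀ ≤ s →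
      φ s - φ s₀ = ∫ r in s₀..s, (2 * Q r r - Q r s - Q r s₀) := by
    intro s₀ h0 s h1 hle
    have hsub : Icc s₀ s ⊆ Icc (0:ℝ) T := Icc_subset_Icc h0.1 h1.2
    have hk := beam_kinc ζ T hT w hw h0 h1 hle
    have hw1 := beam_winc ζ T hT w hw h0 h1 h1 hle
    have hw2 := beam_winc ζ T hT w hw h0 h1 h0 hle
    have hsym := beam_gsym ζ T hT w hw h0 h1
    have hQsl : ∀ u ∈ Icc (0:ℝ) T, IntervalIntegrable (fun r => Q r u) volume s₀ s := by
      intro u hu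
      apply ContinuousOn.intervalIntegrable_of_Icc hle
      apply ContinuousOn.comp QC
        (Continuous.continuousOn (by fun_prop : Continuous (fun r : ℝ => (r, u))))
      exact fun r hr => ⟨hsub hr, hu⟩
    have hQd : IntervalIntegrable (fun r => 2 * Q r r) volume s₀ s := by
      apply ContinuousOn.intervalIntegrable_of_Icc hle
      apply ContinuousOn.mul continuousOn_const
      apply ContinuousOn.comp QC
        (Continuous.continuousOn (by fun_prop : Continuous (fun r : ℝ => (r, r))))
      exact fun r hr => ⟨hsub hr, hsub hr⟩
    have split : (∫ r in s₀..s, (2 * Q r r - Q r s - Q r s₀))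
        = (∫ r in s₀..s, 2 * Q r r) - (∫ r in s₀..s, Q r s) - (∫ r in s₀..s, Q r s₀) := by
      rw [intervalIntegral.integral_sub (hQd.sub (hQsl s h1)) (hQsl s₀ h0),
        intervalIntegral.integral_sub hQd (hQsl s h1)]
    rw [split]
    simp only [hφdef, hQdef] at *
    linarith
  -- φ has zero right derivative
  have hderiv : ∀ s₀ ∈ Ico (0:ℝ) T, HasDerivWithinAt φ 0 (Ici s₀) s₀ := by
    intro s₀ hs₀
    have hs₀J : s₀ ∈ Icc (0:ℝ) T := ⟨hs₀.1, hs₀.2.le⟩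
    have hmem : Icc s₀ T ∈ nhdsWithin s₀ (Ici s₀) := by
      rw [← Ici_inter_Iic]
      exact Filter.inter_mem self_mem_nhdsWithin
        (mem_nhdsWithin_of_mem_nhds (Iic_mem_nhds hs₀.2))
    apply HasDerivWithinAt.mono_of_mem_nhdsWithin _ hmem
    rw [hasDerivWithinAt_iff_tendsto_slope, Metric.tendsto_nhdsWithin_nhds]
    intro ε hε
    have hQat : ContinuousWithinAt (fun p : ℝ × ℝ => Q p.1 p.2)
        (Icc (0:ℝ) T ×ˢ Icc (0:ℝ) T) (s₀, s₀) := QC _ ⟨hs₀J, hs₀J⟩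
    rw [Metric.continuousWithinAt_iff] at hQat
    obtain ⟨δ, hδpos, hδ⟩ := hQat (ε/5) (by positivity)
    refine ⟨δ, hδpos, ?_⟩
    intro s hsm hdist
    have hsI : s ∈ Icc s₀ T := hsm.1
    have hne : s ≠ s₀ := by simpa using hsm.2
    have hlt : s₀ < s := lt_of_le_of_ne hsI.1 (Ne.symm hne)
    have hsJ : s ∈ Icc (0:ℝ) T := ⟨hs₀.1.trans hsI.1, hsI.2⟩
    have hds : s - s₀ < δ := by
      rw [Real.dist_eq, abs_of_pos (by linarith)] at hdist; exact hdist
    have hinc := inc s₀ hs₀J s hsJ hsI.1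
    have hbound : ∀ r ∈ uIoc s₀ s, ‖2 * Q r r - Q r s - Q r s₀‖ ≤ 4 * (ε/5) := by
      intro r hr
      rw [uIoc_of_le hlt.le] at hr
      have hrJ : r ∈ Icc (0:ℝ) T := ⟨hs₀.1.trans hr.1.le, hr.2.trans hsJ.2⟩
      have aux : ∀ u : ℝ, u ∈ Icc (0:ℝ) T → dist u s₀ < δ →
          |Q r u - Q s₀ s₀| < ε/5 := by
        intro u huJ hud
        have h := hδ (show (r, u) ∈ Icc (0:ℝ) T ×ˢ Icc (0:ℝ) T from ⟨hrJ, huJ⟩) ?_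
        · rwa [Real.dist_eq] at h
        · rw [Prod.dist_eq]
          apply max_lt _ hud
          rw [Real.dist_eq, abs_of_pos (by linarith [hr.1])]
          linarith [hr.1, hr.2]
      have e1 := aux r hrJ (by
        rw [Real.dist_eq, abs_of_pos (by linarith [hr.1])]; linarith [hr.1, hr.2])
      have e2 := aux s hsJ hdist
      have e3 := aux s₀ hs₀J (by simpa [dist_self] using hδpos)
      rw [Real.norm_eq_abs, abs_le]
      obtain ⟨a1, a2⟩ := abs_lt.mp e1
      obtain ⟨b1, b2⟩ := abs_lt.mp e2
      obtain ⟨c1, c2⟩ := abs_lt.mp e3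
      constructor <;> nlinarith
    have hnorm : ‖φ s - φ s₀‖ ≤ 4 * (ε/5) * |s - s₀| := by
      rw [hinc]
      exact intervalIntegral.norm_integral_le_of_norm_le_const hbound
    rw [dist_zero_right, slope_def_field, norm_div]
    have habs : (0:ℝ) < ‖s - s₀‖ := by
      rw [Real.norm_eq_abs, abs_pos]; exact sub_ne_zero.mpr hne
    rw [div_lt_iff₀ habs]
    calc ‖φ s - φ s₀‖ ≤ 4 * (ε/5) * |s - s₀| := hnorm
      _ < ε * ‖s - s₀‖ := by
          rw [Real.norm_eq_abs]
          have habs' : (0:ℝ) < |s - s₀| := abs_pos.mpr (sub_ne_zero.mpr hne)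
          exact mul_lt_mul_of_pos_right (by linarith) habs'
  -- conclude
  have main := constant_of_has_deriv_right_zero φcont hderiv
  intro t ht
  have e1 := htot t ht
  have e2 := htot 0 (left_mem_Icc.mpr hT.le)
  have e3 := main t ht
  linarith
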